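/- There is a universal constant C > 0 such that for every n ≥ 2 the following holds. Let XOR_n : {0,1}^n → {0,1} be the parity function and let D be the distribution on {0,1}^n which, with probability 99/100, outputs 0 followed by n−1 uniform random bits, and with probability 1/100 outputs 1 followed by one uniform random bit followed by 0^{n−2}. Then every deterministic decision tree of depth at most n−2 errs with probability greater than 1/3 in computing XOR_n on x ∼ D (so dt_{1/3}(XOR_n, D) ≥ n−1), while corr_{1/3}(XOR_n, D) ≤ C. -/

import Mathlib

open Finset

/-- A deterministic decision tree over alphabet `α`, querying positions `ι`,
with output labels `β`.  A `node i ch` queries position `i` and has one child per symbol. -/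
inductive DTree (α ι β : Type) : Type where
  | leaf : β → DTree α ι β
  | node : ι → (α → DTree α ι β) → DTree α ι β

namespace DTree

/-- The output of the tree on input `x`. -/
def eval {α ι β : Type} : DTree α ι β → (ι → α) → β
  | .leaf b, _ => b
  | .node i ch, x => (ch (x i)).eval x

/-- The depth of a tree: the maximum number of queries along any root-to-leaf path. -/
def depth {α ι β : Type} [Fintype α] : DTree α ι β → ℕ
  | .leaf _ => 0
  | .node _ ch => 1 + Finset.univ.sup fun a => (ch a).depth

/-- `Input(ℓ)` for the leaf `ℓ` reached by `x`: the set of inputs that follow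
the same root-to-leaf path as `x`. -/
def reach {α ι β : Type} : DTree α ι β → (ι → α) → Set (ι → α)
  | .leaf _, _ => Set.univ
  | .node i ch, x => {y | y i = x i} ∩ (ch (x i)).reach x

/-- For a tree on `k` samples, the set `ℓ_j ⊆ Σ^n` of strings consistent with the
queries made to the `j`-th sample on the path followed by input `x`. -/
def reachJ {α β : Type} {k n : ℕ} :
    DTree α (Fin k × Fin n) β → ((Fin k × Fin n) → α) → Fin k → Set (Fin n → α)
  | .leaf _, _, _ => Set.univ
  | .node p ch, x, j =>
      (if p.1 = j then {y : Fin n → α | y p.2 = x p} else Set.univ) ∩ (ch (x p)).reachJ x j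

end DTree

/-- Probability mass of a set `S` under (the mass function of) a distribution `D`. -/
noncomputable def prS {γ : Type} [Fintype γ] (D : γ → ℝ) (S : Set γ) : ℝ :=
  ∑ x, S.indicator D x

/-- `D` is a probability mass function on the finite type `γ`. -/
def IsDist {γ : Type} [Fintype γ] (D : γ → ℝ) : Prop :=
  (∀ x, 0 ≤ D x) ∧ ∑ x, D x = 1

/-- Likelihood ratio `LR(S) = D1(S)/D0(S)`. -/
noncomputable def LR {γ : Type} [Fintype γ] (D0 D1 : γ → ℝ) (S : Set γ) : ℝ :=
  prS D1 S / prS D0 S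

/-- The `k`-fold product distribution `D^k` on `k` samples (input flattened). -/
noncomputable def prodD {α : Type} {n k : ℕ} (D : (Fin n → α) → ℝ) :
    ((Fin k × Fin n) → α) → ℝ :=
  fun x => ∏ j, D fun i => x (j, i)

/-- `T` is a `(δ, M)`-likelihood booster for `D0, D1`. -/
def LBooster {α β : Type} [Fintype α] {n : ℕ}
    (D0 D1 : (Fin n → α) → ℝ) (δ M : ℝ) (T : DTree α (Fin n) β) : Prop :=
  1 - δ ≤ prS D1 {x | M ≤ LR D0 D1 (T.reach x)}

/-- `T` is a `(δ, M)`-overall likelihood booster for `D0^k, D1^k`. -/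
def OBooster {α β : Type} [Fintype α] {n k : ℕ}
    (D0 D1 : (Fin n → α) → ℝ) (δ M : ℝ) (T : DTree α (Fin k × Fin n) β) : Prop :=
  1 - δ ≤ prS (prodD D1) {x | M ≤ ∏ j, LR D0 D1 (T.reachJ x j)}

open scoped Classical in
/-- `T` is a `(δ, ε, M)`-uniform likelihood booster for `D0^k, D1^k`. -/
def UBooster {α β : Type} [Fintype α] {n k : ℕ}
    (D0 D1 : (Fin n → α) → ℝ) (δ ε M : ℝ) (T : DTree α (Fin k × Fin n) β) : Prop :=
  1 - δ ≤ prS (prodD D1)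
    {x | (1 - ε) * k ≤ ((Finset.univ.filter fun j => M ≤ LR D0 D1 (T.reachJ x j)).card : ℝ)}

/-- `D = ½D0 + ½D1` is a balanced input distribution for the partial function `f`:
`D_b` is a distribution supported on `f⁻¹(b)`. -/
def BalancedDist {n : ℕ} (f : (Fin n → Bool) → Option Bool) (D0 D1 : (Fin n → Bool) → ℝ) : Prop :=
  IsDist D0 ∧ IsDist D1 ∧ (∀ x, D0 x ≠ 0 → f x = some false) ∧ ∀ x, D1 x ≠ 0 → f x = some true

/-- `corr_ε(f, D)`: the minimum over `k ≥ 1` of the least depth of a deterministic decision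
tree on `k` samples which, for a uniformly random `b`, on input drawn from `D_b^k`
outputs `b` with probability at least `1 - ε`. -/
noncomputable def corrC {n : ℕ} (ε : ℝ) (D0 D1 : (Fin n → Bool) → ℝ) : ℕ :=
  sInf {q | ∃ k, 0 < k ∧ ∃ T : DTree Bool (Fin k × Fin n) Bool, T.depth ≤ q ∧
    1 - ε ≤ (prS (prodD D0) {x | T.eval x = false} + prS (prodD D1) {x | T.eval x = true}) / 2}

/-- `sel_ε(f, D)`: the minimum over `k ≥ 1` of the least depth of a deterministic decision
tree on `k` samples from `D` outputting a pair `(i, f(xⁱ))` with probability at least `1 - ε`. -/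
noncomputable def selC {n : ℕ} (ε : ℝ) (f : (Fin n → Bool) → Option Bool)
    (D : (Fin n → Bool) → ℝ) : ℕ :=
  sInf {q | ∃ k, 0 < k ∧ ∃ T : DTree Bool (Fin k × Fin n) (Fin k × Bool), T.depth ≤ q ∧
    1 - ε ≤ prS (prodD D) {x | f (fun i => x ((T.eval x).1, i)) = some (T.eval x).2}}

/-- The product distribution `D_{ab}^k = (Da × Db)^k` on `k` pairs of samples. -/
noncomputable def prodD2 {n k : ℕ} (Da Db : (Fin n → Bool) → ℝ) :
    ((Fin k × Fin 2 × Fin n) → Bool) → ℝ :=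
  fun x => ∏ j, (Da fun i => x (j, 0, i)) * Db fun i => x (j, 1, i)

/-- `bicorr_ε(f, D)`: minimum over `k ≥ 1` of the least depth of a deterministic decision tree
that distinguishes `D_{01}^k` (output `false`) from `D_{10}^k` (output `true`) with
probability at least `1 - ε` for a uniformly random choice between the two. -/
noncomputable def bicorrC {n : ℕ} (ε : ℝ) (D0 D1 : (Fin n → Bool) → ℝ) : ℕ :=
  sInf {q | ∃ k, 0 < k ∧ ∃ T : DTree Bool (Fin k × Fin 2 × Fin n) Bool, T.depth ≤ q ∧
    1 - ε ≤ (prS (prodD2 D0 D1) {x | T.eval x = false} +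
             prS (prodD2 D1 D0) {x | T.eval x = true}) / 2}

/-- `R_ε(f)`: randomized query complexity, i.e. the least `q` such that some probability
distribution over deterministic decision trees of depth at most `q` outputs `f x`
with probability at least `1 - ε` for every `x` in the domain of `f`. -/
noncomputable def Rq {ι : Type} (ε : ℝ) (f : (ι → Bool) → Option Bool) : ℕ :=
  sInf {q | ∃ (p : ℕ → ℝ) (Ts : ℕ → DTree Bool ι Bool),
    (∀ i, 0 ≤ p i) ∧ (∑' i, p i) = 1 ∧ (∀ i, (Ts i).depth ≤ q) ∧
    ∀ x b, f x = some b → 1 - ε ≤ ∑' i, if (Ts i).eval x = b then p i else 0}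

/-- `corr_ε(f)`: the maximum of `corr_ε(f, D)` over balanced input distributions `D` for `f`. -/
noncomputable def corrMax {n : ℕ} (ε : ℝ) (f : (Fin n → Bool) → Option Bool) : ℕ :=
  sSup {q | ∃ D0 D1, BalancedDist f D0 D1 ∧ q = corrC ε D0 D1}

/-- `sel_ε(f)`: the maximum of `sel_ε(f, D)` over balanced input distributions `D` for `f`. -/
noncomputable def selMax {n : ℕ} (ε : ℝ) (f : (Fin n → Bool) → Option Bool) : ℕ :=
  sSup {q | ∃ D0 D1, BalancedDist f D0 D1 ∧ q = selC ε f fun x => (D0 x + D1 x) / 2}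
/-- The parity (XOR) of all bits of `x`. -/
def XORn {n : ℕ} (x : Fin n → Bool) : Bool :=
  decide ((Finset.univ.filter fun i => x i = true).card % 2 = 1)

/-- The parity of the bits of `x` in positions `≥ 2`. -/
def XORtail {n : ℕ} (x : Fin n → Bool) : Bool :=
  decide ((Finset.univ.filter fun i : Fin n => 2 ≤ (i : ℕ) ∧ x i = true).card % 2 = 1)

/-- `x` with the bits in block `B` flipped. -/
def flipB {n : ℕ} (x : Fin n → Bool) (B : Finset (Fin n)) : Fin n → Bool :=
  fun i => if i ∈ B then !(x i) else x i

/-- `B` is a sensitive block of `f` on `x`: `x^B` lies in the domain of `f` and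
`f(x^B) ≠ f(x)`. -/
def SensBlock {n : ℕ} (f : (Fin n → Bool) → Option Bool) (x : Fin n → Bool)
    (B : Finset (Fin n)) : Prop :=
  (f (flipB x B)).isSome ∧ f (flipB x B) ≠ f x

/-- Fractional block sensitivity `fbs(f) = max_x fbs(f, x)`, where `fbs(f,x)` is the value
of the fractional packing LP over the sensitive blocks of `x`. -/
noncomputable def fbs {n : ℕ} (f : (Fin n → Bool) → Option Bool) : ℝ :=
  sSup {r | ∃ x, (f x).isSome ∧ ∃ w : Finset (Fin n) → ℝ,
    (∀ B, 0 ≤ w B) ∧ (∀ B, w B ≤ 1) ∧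
    (∀ B, w B ≠ 0 → SensBlock f x B) ∧
    (∀ i, ∑ B ∈ Finset.univ.filter (fun B => i ∈ B), w B ≤ 1) ∧
    r = ∑ B, w B}

/-- The composed partial function `f ∘ g`, defined on `(x¹, …, xⁿ)` when every `xⁱ` is in
the domain of `g`, with value `f(g(x¹), …, g(xⁿ))`. -/
def compFG {n m : ℕ} (f : (Fin n → Bool) → Option Bool) (g : (Fin m → Bool) → Option Bool) :
    ((Fin n × Fin m) → Bool) → Option Bool :=
  fun x =>
    if h : ∀ i, (g fun s => x (i, s)).isSome then
      f fun i => (g fun s => x (i, s)).get (h i)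
    else none

/-- Number of queries that `T` makes into block `B` on input `x` (each query reads one bit
`(i, s)`, and counts if `i ∈ B`). -/
def countQ {m n : ℕ} {β : Type} (B : Finset (Fin n)) :
    DTree Bool (Fin n × Fin m) β → ((Fin n × Fin m) → Bool) → ℕ
  | .leaf _, _ => 0
  | .node p ch, x => (if p.1 ∈ B then 1 else 0) + countQ B (ch (x p)) x

/-- The Shaltiel distribution for `XOR_n`, `n = m + 2`: with probability 99/100 output `0`
followed by `n-1` uniform bits; with probability 1/100 output `1`, one uniform bit, `0^{n-2}`. -/
noncomputable def D16 (m : ℕ) : (Fin (m + 2) → Bool) → ℝ := fun x =>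
  (if x 0 = false then (99 / 100) * ((1:ℝ) / 2) ^ (m + 1) else 0) +
  (if x 0 = true ∧ (∀ i : Fin (m + 2), 2 ≤ (i : ℕ) → x i = false) then 1 / 200 else 0)

/-- The distribution of Theorem 2 for `XOR_n`, `n = m + 3`: sample `z` uniform on `n-2` bits,
`a := XOR(z)`, `b` uniform; output `a a z` w.p. 1/100 and `b b z` w.p. 99/100. -/
noncomputable def D34 (m : ℕ) : (Fin (m + 3) → Bool) → ℝ := fun x =>
  if x 0 = x 1 then
    ((1:ℝ) / 2) ^ (m + 1) * (99 / 200 + if x 0 = XORtail x then 1 / 100 else 0)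
  else 0

/-- A distribution conditioned on `XORn x = b` (for distributions giving each value
probability 1/2). -/
noncomputable def condXOR {n : ℕ} (D : (Fin n → Bool) → ℝ) (b : Bool) : (Fin n → Bool) → ℝ :=
  fun x => if XORn x = b then 2 * D x else 0

/-! ### Auxiliary development -/

def par {ι : Type} (F : Finset ι) (x : ι → Bool) : Bool :=
  decide ((F.filter fun i => x i = true).card % 2 = 1)

lemma par_empty {ι : Type} (x : ι → Bool) : par (∅ : Finset ι) x = false := by
  simp [par]

lemma par_erase {ι : Type} [DecidableEq ι] {F : Finset ι} {i : ι} (hi : i ∈ F) (x : ι → Bool) :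
    par F x = xor (x i) (par (F.erase i) x) := by
  have hkey : (F.filter fun j => x j = true).card
      = (if x i = true then 1 else 0) + ((F.erase i).filter fun j => x j = true).card := by
    rw [Finset.filter_erase]
    by_cases h : x i = true
    · have hm : i ∈ F.filter fun j => x j = true := Finset.mem_filter.mpr ⟨hi, h⟩
      have hpos : 0 < (F.filter fun j => x j = true).card := Finset.card_pos.mpr ⟨i, hm⟩
      rw [if_pos h, Finset.card_erase_of_mem hm]
      omega
    · rw [if_neg h, Finset.erase_eq_of_notMem (by simp [h])]
      omega
  unfold par
  rw [hkey]
  by_cases hxi : x i = true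
  · have h2 : ((1 + ((F.erase i).filter fun j => x j = true).card) % 2 = 1)
        ↔ ¬ (((F.erase i).filter fun j => x j = true).card % 2 = 1) := by omega
    rw [if_pos hxi, hxi, Bool.true_xor, decide_eq_decide.mpr h2, decide_not]
  · have hxf : x i = false := by simpa using hxi
    rw [if_neg hxi, hxf, Bool.false_xor, zero_add]

lemma countB {ι : Type} [Fintype ι] [DecidableEq ι] :
    ∀ (N : ℕ) (F : Finset ι), F.card = N → 0 < N → ∀ (y : ι → Bool) (d : Bool),
    (Finset.univ.filter fun x : ι → Bool =>
        (∀ i, i ∉ F → x i = y i) ∧ par F x = d).card = 2 ^ (N - 1) := by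
  intro N
  induction N with
  | zero => intro F _ h; omega
  | succ N ih =>
    intro F hF _ y d
    obtain ⟨i, hi⟩ := Finset.card_pos.mp (by omega : 0 < F.card)
    have hsplit := Finset.card_filter_add_card_filter_not
      (s := (Finset.univ.filter fun x : ι → Bool =>
        (∀ j, j ∉ F → x j = y j) ∧ par F x = d)) (p := fun x : ι → Bool => x i = true)
    rw [Finset.filter_filter, Finset.filter_filter] at hsplit
    simp only [Bool.not_eq_true] at hsplit
    have key : ∀ v : Bool,
        (Finset.univ.filter fun x : ι → Bool =>
          ((∀ j, j ∉ F → x j = y j) ∧ par F x = d) ∧ x i = v)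
        = (Finset.univ.filter fun x : ι → Bool =>
          (∀ j, j ∉ F.erase i → x j = Function.update y i v j)
            ∧ par (F.erase i) x = xor v d) := by
      intro v
      apply Finset.filter_congr
      intro x _
      constructor
      · rintro ⟨⟨h1, h2⟩, h3⟩
        constructor
        · intro j hj
          by_cases hji : j = i
          · subst hji; rw [h3, Function.update_self]
          · have hjF : j ∉ F := fun hjF => hj (Finset.mem_erase.mpr ⟨hji, hjF⟩)
            rw [h1 j hjF, Function.update_of_ne hji]
        · have hpe := par_erase hi x
          rw [h3, h2] at hpe
          rw [hpe]
          cases v <;> simp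
      · rintro ⟨h1, h2⟩
        have hxi : x i = v := by
          have := h1 i (by simp)
          rwa [Function.update_self] at this
        refine ⟨⟨?_, ?_⟩, hxi⟩
        · intro j hjF
          have hji : j ≠ i := fun h => hjF (h ▸ hi)
          have := h1 j (fun hj => hjF (Finset.mem_of_mem_erase hj))
          rwa [Function.update_of_ne hji] at this
        · rw [par_erase hi x, hxi, h2]
          cases v <;> cases d <;> rfl
    rw [key true, key false] at hsplit
    clear key
    rcases Nat.eq_zero_or_pos N with hN | hN
    · subst hN
      have herase : F.erase i = ∅ := Finset.card_eq_zero.mp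
        (by rw [Finset.card_erase_of_mem hi, hF])
      have hone : ∀ v : Bool, (Finset.univ.filter fun x : ι → Bool =>
          (∀ j, j ∉ F.erase i → x j = Function.update y i v j)
            ∧ par (F.erase i) x = xor v d).card = if v = d then 1 else 0 := by
        intro v
        rw [herase]
        by_cases hvd : v = d
        · rw [if_pos hvd]
          have hset : (Finset.univ.filter fun x : ι → Bool =>
              (∀ j, j ∉ (∅ : Finset ι) → x j = Function.update y i v j)
                ∧ par (∅ : Finset ι) x = xor v d)
              = {Function.update y i v} := by
            ext x
            simp only [Finset.mem_filter, Finset.mem_univ, true_and, Finset.mem_singleton]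
            constructor
            · rintro ⟨h1, _⟩
              funext j
              exact h1 j (Finset.notMem_empty j)
            · rintro rfl
              subst hvd
              exact ⟨fun j _ => rfl, by rw [par_empty, Bool.xor_self]⟩
          rw [hset, Finset.card_singleton]
        · rw [if_neg hvd]
          rw [Finset.card_eq_zero, Finset.filter_eq_empty_iff]
          intro x _
          rintro ⟨-, h2⟩
          rw [par_empty] at h2
          apply hvd
          cases v <;> cases d <;> simp at h2 ⊢
      rw [hone true, hone false] at hsplit
      rw [show (0:ℕ) + 1 - 1 = 0 from Nat.add_sub_cancel _ _, pow_zero, ← hsplit]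
      cases d <;> simp
    · have hcarde : (F.erase i).card = N := by
        rw [Finset.card_erase_of_mem hi, hF]
        exact Nat.add_sub_cancel _ _
      rw [ih (F.erase i) hcarde hN _ _, ih (F.erase i) hcarde hN _ _] at hsplit
      have hN1 : N - 1 + 1 = N := Nat.succ_pred_eq_of_pos hN
      have h2 : (2:ℕ)^(N-1) + 2^(N-1) = 2^N := by
        calc (2:ℕ)^(N-1) + 2^(N-1) = 2^(N-1) * 2 := by ring
        _ = 2^(N-1+1) := (pow_succ 2 (N-1)).symm
        _ = 2^N := by rw [hN1]
      rw [show N + 1 - 1 = N from Nat.add_sub_cancel _ _, ← hsplit]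
      exact h2

lemma xor_shuffle (a b c : Bool) : xor (xor a b) c = xor b (xor a c) := by
  cases a <;> cases b <;> cases c <;> rfl

lemma countA {ι : Type} [Fintype ι] [DecidableEq ι] :
    ∀ (T : DTree Bool ι Bool) (F : Finset ι) (y : ι → Bool) (c : Bool), T.depth < F.card →
    (Finset.univ.filter fun x : ι → Bool =>
      (∀ i, i ∉ F → x i = y i) ∧ T.eval x = xor (par F x) c).card = 2 ^ (F.card - 1) := by
  intro T
  induction T with
  | leaf b =>
    intro F y c hd
    have hcongr : Finset.univ.filter (fun x : ι → Bool =>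
        (∀ i, i ∉ F → x i = y i) ∧ (DTree.leaf b : DTree Bool ι Bool).eval x = xor (par F x) c)
        = Finset.univ.filter (fun x : ι → Bool =>
        (∀ i, i ∉ F → x i = y i) ∧ par F x = xor b c) := by
      apply Finset.filter_congr
      intro x _
      apply and_congr_right
      intro _
      show (DTree.leaf b : DTree Bool ι Bool).eval x = xor (par F x) c ↔ _
      rw [show (DTree.leaf b : DTree Bool ι Bool).eval x = b from rfl]
      cases hp : par F x <;> cases b <;> cases c <;> simp
    rw [hcongr]
    exact countB F.card F rfl (by simpa [DTree.depth] using hd) y (xor b c)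
  | node p ch ih =>
    intro F y c hd
    obtain ⟨S, hS⟩ : ∃ S, S = Finset.univ.sup fun a : Bool => (ch a).depth := ⟨_, rfl⟩
    have hdepth : (DTree.node p ch).depth = 1 + S := by rw [hS]; rfl
    by_cases hp : p ∈ F
    · -- split on the value of x p
      have hsplit := Finset.card_filter_add_card_filter_not
        (s := (Finset.univ.filter fun x : ι → Bool =>
          (∀ j, j ∉ F → x j = y j) ∧ (DTree.node p ch).eval x = xor (par F x) c))
        (p := fun x : ι → Bool => x p = true)
      rw [Finset.filter_filter, Finset.filter_filter] at hsplit
      simp only [Bool.not_eq_true] at hsplit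
      have key : ∀ v : Bool,
          (Finset.univ.filter fun x : ι → Bool =>
            ((∀ j, j ∉ F → x j = y j) ∧ (DTree.node p ch).eval x = xor (par F x) c) ∧ x p = v)
          = (Finset.univ.filter fun x : ι → Bool =>
            (∀ j, j ∉ F.erase p → x j = Function.update y p v j)
              ∧ (ch v).eval x = xor (par (F.erase p) x) (xor v c)) := by
        intro v
        apply Finset.filter_congr
        intro x _
        have heval : (DTree.node p ch).eval x = (ch (x p)).eval x := rfl
        constructor
        · rintro ⟨⟨h1, h2⟩, h3⟩
          constructor
          · intro j hj
            by_cases hji : j = p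
            · subst hji; rw [h3, Function.update_self]
            · have hjF : j ∉ F := fun hjF => hj (Finset.mem_erase.mpr ⟨hji, hjF⟩)
              rw [h1 j hjF, Function.update_of_ne hji]
          · rw [heval, h3] at h2
            rw [h2, par_erase hp x, h3, xor_shuffle]
        · rintro ⟨h1, h2⟩
          have hxp : x p = v := by
            have := h1 p (by simp)
            rwa [Function.update_self] at this
          refine ⟨⟨?_, ?_⟩, hxp⟩
          · intro j hjF
            have hji : j ≠ p := fun h => hjF (h ▸ hp)
            have := h1 j (fun hj => hjF (Finset.mem_of_mem_erase hj))
            rwa [Function.update_of_ne hji] at this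
          · rw [heval, hxp, h2, par_erase hp x, hxp, xor_shuffle]
      rw [key true, key false] at hsplit
      clear key
      rw [hdepth] at hd
      have hcard2 : 2 ≤ F.card := by clear hsplit; omega
      have hcarde : (F.erase p).card = F.card - 1 := by
        rw [Finset.card_erase_of_mem hp]
      have hdch : ∀ v : Bool, (ch v).depth < (F.erase p).card := by
        intro v
        have hle : (ch v).depth ≤ S := by
          rw [hS]
          exact Finset.le_sup (f := fun a : Bool => (ch a).depth) (Finset.mem_univ v)
        rw [hcarde]
        clear hsplit
        omega
      rw [ih true (F.erase p) _ _ (hdch true), ih false (F.erase p) _ _ (hdch false)] at hsplit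
      rw [hcarde] at hsplit
      have h2 : (2:ℕ)^(F.card - 1 - 1) + 2^(F.card - 1 - 1) = 2^(F.card - 1) := by
        have hN1 : F.card - 1 - 1 + 1 = F.card - 1 := by clear hsplit; omega
        calc (2:ℕ)^(F.card-1-1) + 2^(F.card-1-1) = 2^(F.card-1-1) * 2 := by ring
        _ = 2^(F.card-1-1+1) := (pow_succ 2 _).symm
        _ = 2^(F.card-1) := by rw [hN1]
      rw [← hsplit]
      exact h2
    · -- p is a fixed position: x p = y p on the whole set
      have hcongr : Finset.univ.filter (fun x : ι → Bool =>
          (∀ i, i ∉ F → x i = y i) ∧ (DTree.node p ch).eval x = xor (par F x) c)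
          = Finset.univ.filter (fun x : ι → Bool =>
          (∀ i, i ∉ F → x i = y i) ∧ (ch (y p)).eval x = xor (par F x) c) := by
        apply Finset.filter_congr
        intro x _
        apply and_congr_right
        intro h1
        have heval : (DTree.node p ch).eval x = (ch (x p)).eval x := rfl
        rw [heval, h1 p hp]
      rw [hcongr]
      apply ih
      have hle : (ch (y p)).depth ≤ S := by
        rw [hS]
        exact Finset.le_sup (f := fun a : Bool => (ch a).depth) (Finset.mem_univ (y p))
      rw [hdepth] at hd
      clear hcongr
      omega

lemma xorn_eq_par (m : ℕ) (x : Fin (m+2) → Bool) (h : x 0 = false) :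
    XORn x = par ((Finset.univ : Finset (Fin (m+2))).erase 0) x := by
  have h0 : XORn x = par Finset.univ x := rfl
  rw [h0, par_erase (Finset.mem_univ (0 : Fin (m+2))) x, h, Bool.false_xor]

def epair (m : ℕ) (v : Bool) : Fin (m+2) → Bool :=
  fun i => if (i : ℕ) = 0 then true else if (i : ℕ) = 1 then v else false

lemma epair_zero (m : ℕ) (v : Bool) : epair m v 0 = true := by simp [epair]

lemma epair_one (m : ℕ) (v : Bool) : epair m v 1 = v := by simp [epair]

lemma epair_tail (m : ℕ) (v : Bool) : ∀ i : Fin (m+2), 2 ≤ (i : ℕ) → epair m v i = false := by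
  intro i hi
  unfold epair
  rw [if_neg (by omega), if_neg (by omega)]

lemma fin_tri (m : ℕ) (i : Fin (m+2)) : (i:ℕ) = 0 ∨ (i:ℕ) = 1 ∨ 2 ≤ (i:ℕ) := by omega

lemma pair_iff (m : ℕ) (x : Fin (m+2) → Bool) :
    (x 0 = true ∧ ∀ i : Fin (m+2), 2 ≤ (i:ℕ) → x i = false)
      ↔ (x = epair m true ∨ x = epair m false) := by
  constructor
  · rintro ⟨h0, ht⟩
    have hx : x = epair m (x 1) := by
      funext i
      rcases fin_tri m i with h | h | h
      · have hi : i = 0 := Fin.ext (by simpa using h)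
        rw [hi, h0, epair_zero]
      · have hi : i = 1 := Fin.ext (by simpa using h)
        rw [hi, epair_one]
      · rw [ht i h, epair_tail m _ i h]
    cases h1 : x 1
    · right; rw [← h1]; exact hx
    · left; rw [← h1]; exact hx
  · rintro (rfl | rfl)
    · exact ⟨epair_zero m true, epair_tail m true⟩
    · exact ⟨epair_zero m false, epair_tail m false⟩

lemma xorn_true_case (m : ℕ) (x : Fin (m+2) → Bool) (h0 : x 0 = true)
    (ht : ∀ i : Fin (m+2), 2 ≤ (i:ℕ) → x i = false) : XORn x = !(x 1) := by
  have hset : (Finset.univ.filter fun i : Fin (m+2) => x i = true)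
      = if x 1 = true then ({0, 1} : Finset (Fin (m+2))) else {0} := by
    by_cases hx1 : x 1 = true
    · rw [if_pos hx1]
      ext i
      simp only [Finset.mem_filter, Finset.mem_univ, true_and, Finset.mem_insert,
        Finset.mem_singleton]
      constructor
      · intro hxi
        rcases fin_tri m i with h | h | h
        · exact Or.inl (Fin.ext (by simpa using h))
        · exact Or.inr (Fin.ext (by simpa using h))
        · rw [ht i h] at hxi; exact absurd hxi (by simp)
      · rintro (rfl | rfl)
        · exact h0
        · exact hx1
    · rw [if_neg hx1]
      ext i
      simp only [Finset.mem_filter, Finset.mem_univ, true_and, Finset.mem_singleton]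
      constructor
      · intro hxi
        rcases fin_tri m i with h | h | h
        · exact Fin.ext (by simpa using h)
        · exfalso
          have hi : i = 1 := Fin.ext (by simpa using h)
          rw [hi] at hxi
          exact hx1 hxi
        · rw [ht i h] at hxi; exact absurd hxi (by simp)
      · rintro rfl; exact h0
  unfold XORn
  rw [hset]
  cases hx1 : x 1
  · simp
  · rw [if_pos rfl, Finset.card_insert_of_notMem (by simp [Fin.ext_iff]),
      Finset.card_singleton]
    simp

lemma xorn_epair (m : ℕ) (v : Bool) : XORn (epair m v) = !v := by
  rw [xorn_true_case m _ (epair_zero m v) (epair_tail m v), epair_one]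

lemma epair_ne (m : ℕ) : epair m true ≠ epair m false := by
  intro h
  have := congrFun h 1
  rw [epair_one, epair_one] at this
  exact Bool.noConfusion this

lemma D16_nonneg (m : ℕ) (x : Fin (m+2) → Bool) : 0 ≤ D16 m x := by
  unfold D16
  apply add_nonneg <;> split <;> norm_num

lemma D16_true_support (m : ℕ) (x : Fin (m+2) → Bool) (h0 : x 0 = true)
    (hne : D16 m x ≠ 0) : ∀ i : Fin (m+2), 2 ≤ (i:ℕ) → x i = false := by
  intro i hi
  by_contra hxi
  apply hne
  unfold D16
  rw [if_neg (by simp [h0]), if_neg ?hc, add_zero]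
  case hc => rintro ⟨-, hall⟩; exact hxi (hall i hi)

lemma cond_nonneg (m : ℕ) (b : Bool) (y : Fin (m+2) → Bool) : 0 ≤ condXOR (D16 m) b y := by
  unfold condXOR
  split
  · have := D16_nonneg m y; linarith
  · exact le_refl _

lemma erase_zero_card (m : ℕ) :
    ((Finset.univ : Finset (Fin (m+2))).erase 0).card = m + 1 := by
  rw [Finset.card_erase_of_mem (Finset.mem_univ _), Finset.card_univ, Fintype.card_fin]
  omega

lemma card_filter_congr {γ : Type} [Fintype γ] {p q : γ → Prop}
    (hp : DecidablePred p) (hq : DecidablePred q) (h : ∀ x, p x ↔ q x) :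
    (@Finset.filter _ p hp Finset.univ).card = (@Finset.filter _ q hq Finset.univ).card := by
  congr 1
  ext x
  rw [Finset.mem_filter, Finset.mem_filter]
  exact and_congr Iff.rfl (h x)

lemma not_mem_erase_zero (m : ℕ) (i : Fin (m+2)) :
    i ∉ (Finset.univ : Finset (Fin (m+2))).erase 0 ↔ i = 0 := by
  simp [Finset.mem_erase]

lemma count_cube (m : ℕ) (b : Bool) :
    (Finset.univ.filter fun x : Fin (m+2) → Bool => x 0 = false ∧ XORn x = b).card
      = 2 ^ m := by
  have hiff : ∀ x : Fin (m+2) → Bool, (x 0 = false ∧ XORn x = b)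
      ↔ ((∀ i, i ∉ (Finset.univ : Finset (Fin (m+2))).erase 0 → x i = false)
          ∧ par ((Finset.univ : Finset (Fin (m+2))).erase 0) x = b) := by
    intro x
    constructor
    · rintro ⟨h0, hx⟩
      refine ⟨fun i hi => ?_, ?_⟩
      · rw [(not_mem_erase_zero m i).mp hi]; exact h0
      · rw [← xorn_eq_par m x h0]; exact hx
    · rintro ⟨hall, hp⟩
      have h0 : x 0 = false := hall 0 (by simp)
      exact ⟨h0, by rw [xorn_eq_par m x h0]; exact hp⟩
  have h2 := countB (m+1) ((Finset.univ : Finset (Fin (m+2))).erase 0)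
    (erase_zero_card m) (by omega) (fun _ => false) b
  rw [Nat.add_sub_cancel] at h2
  refine Eq.trans ?_ h2
  exact card_filter_congr _ _ hiff

lemma count_tree (m : ℕ) (T : DTree Bool (Fin (m+2)) Bool) (hT : T.depth ≤ m) :
    (Finset.univ.filter fun x : Fin (m+2) → Bool =>
      (T.eval x = XORn x) ∧ x 0 = false).card = 2 ^ m := by
  have hiff : ∀ x : Fin (m+2) → Bool, ((T.eval x = XORn x) ∧ x 0 = false)
      ↔ ((∀ i, i ∉ (Finset.univ : Finset (Fin (m+2))).erase 0 → x i = false)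
          ∧ T.eval x = xor (par ((Finset.univ : Finset (Fin (m+2))).erase 0) x) false) := by
    intro x
    constructor
    · rintro ⟨hx, h0⟩
      refine ⟨fun i hi => ?_, ?_⟩
      · rw [(not_mem_erase_zero m i).mp hi]; exact h0
      · rw [Bool.xor_false, ← xorn_eq_par m x h0]; exact hx
    · rintro ⟨hall, hp⟩
      have h0 : x 0 = false := hall 0 (by simp)
      rw [Bool.xor_false, ← xorn_eq_par m x h0] at hp
      exact ⟨hp, h0⟩
  have h2 := countA T ((Finset.univ : Finset (Fin (m+2))).erase 0) (fun _ => false) false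
    (by rw [erase_zero_card m]; omega)
  rw [erase_zero_card m, Nat.add_sub_cancel] at h2
  refine Eq.trans ?_ h2
  exact card_filter_congr _ _ hiff

lemma prS_eq {γ : Type} [Fintype γ] (D : γ → ℝ) (p : γ → Prop) [DecidablePred p] :
    prS D {x | p x} = ∑ x ∈ Finset.univ.filter p, D x := by
  unfold prS
  rw [Finset.sum_filter]
  apply Finset.sum_congr rfl
  intro x _
  rw [Set.indicator_apply]
  exact if_congr (by simp) rfl rfl

lemma part1 (m : ℕ) (T : DTree Bool (Fin (m+2)) Bool) (hT : T.depth ≤ m) :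
    prS (D16 m) {x | T.eval x = XORn x} < 2/3 := by
  classical
  have hpow : (2:ℝ)^m * ((1:ℝ)/2)^(m+1) = 1/2 := by
    rw [pow_succ, ← mul_assoc, ← mul_pow]
    norm_num
  rw [prS_eq (D16 m) (fun x => T.eval x = XORn x)]
  have hsum : ∑ x ∈ Finset.univ.filter (fun x : Fin (m+2) → Bool => T.eval x = XORn x), D16 m x
      = (∑ x ∈ Finset.univ.filter (fun x : Fin (m+2) → Bool => T.eval x = XORn x),
          (if x 0 = false then (99/100) * ((1:ℝ)/2)^(m+1) else 0))
      + (∑ x ∈ Finset.univ.filter (fun x : Fin (m+2) → Bool => T.eval x = XORn x),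
          (if x 0 = true ∧ (∀ i : Fin (m+2), 2 ≤ (i:ℕ) → x i = false) then (1:ℝ)/200 else 0)) := by
    rw [← Finset.sum_add_distrib]
    exact Finset.sum_congr rfl fun x _ => rfl
  rw [hsum]
  have hA : ∑ x ∈ Finset.univ.filter (fun x : Fin (m+2) → Bool => T.eval x = XORn x),
      (if x 0 = false then (99/100) * ((1:ℝ)/2)^(m+1) else 0) = 99/200 := by
    rw [← Finset.sum_filter, Finset.filter_filter, Finset.sum_const, count_tree m T hT,
      nsmul_eq_mul]
    push_cast
    rw [mul_left_comm, hpow]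
    norm_num
  rw [hA]
  have hB : ∑ x ∈ Finset.univ.filter (fun x : Fin (m+2) → Bool => T.eval x = XORn x),
      (if x 0 = true ∧ (∀ i : Fin (m+2), 2 ≤ (i:ℕ) → x i = false) then (1:ℝ)/200 else 0)
      ≤ 1/100 := by
    have hle : ∑ x ∈ Finset.univ.filter (fun x : Fin (m+2) → Bool => T.eval x = XORn x),
        (if x 0 = true ∧ (∀ i : Fin (m+2), 2 ≤ (i:ℕ) → x i = false) then (1:ℝ)/200 else 0)
        ≤ ∑ x : Fin (m+2) → Bool,
        (if x 0 = true ∧ (∀ i : Fin (m+2), 2 ≤ (i:ℕ) → x i = false) then (1:ℝ)/200 else 0) :=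
      Finset.sum_le_sum_of_subset_of_nonneg (Finset.filter_subset _ _)
        (fun x _ _ => by split <;> norm_num)
    have huniv : ∑ x : Fin (m+2) → Bool,
        (if x 0 = true ∧ (∀ i : Fin (m+2), 2 ≤ (i:ℕ) → x i = false) then (1:ℝ)/200 else 0)
        = 1/100 := by
      rw [← Finset.sum_filter]
      have hset : Finset.univ.filter (fun x : Fin (m+2) → Bool =>
          x 0 = true ∧ ∀ i : Fin (m+2), 2 ≤ (i:ℕ) → x i = false)
          = {epair m true, epair m false} := by
        ext x
        simp only [Finset.mem_filter, Finset.mem_univ, true_and, Finset.mem_insert,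
          Finset.mem_singleton]
        exact pair_iff m x
      rw [hset, Finset.sum_insert (by simp only [Finset.mem_singleton]; exact epair_ne m),
        Finset.sum_singleton]
      norm_num
    linarith
  linarith

lemma sumD16half (m : ℕ) (b : Bool) :
    ∑ y ∈ Finset.univ.filter (fun y : Fin (m+2) → Bool => XORn y = b), D16 m y = 1/2 := by
  classical
  have hpow : (2:ℝ)^m * ((1:ℝ)/2)^(m+1) = 1/2 := by
    rw [pow_succ, ← mul_assoc, ← mul_pow]
    norm_num
  have hsum : ∑ y ∈ Finset.univ.filter (fun y : Fin (m+2) → Bool => XORn y = b), D16 m y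
      = (∑ y ∈ Finset.univ.filter (fun y : Fin (m+2) → Bool => XORn y = b),
          (if y 0 = false then (99/100) * ((1:ℝ)/2)^(m+1) else 0))
      + (∑ y ∈ Finset.univ.filter (fun y : Fin (m+2) → Bool => XORn y = b),
          (if y 0 = true ∧ (∀ i : Fin (m+2), 2 ≤ (i:ℕ) → y i = false) then (1:ℝ)/200 else 0)) := by
    rw [← Finset.sum_add_distrib]
    exact Finset.sum_congr rfl fun y _ => rfl
  rw [hsum]
  have hA : ∑ y ∈ Finset.univ.filter (fun y : Fin (m+2) → Bool => XORn y = b),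
      (if y 0 = false then (99/100) * ((1:ℝ)/2)^(m+1) else 0) = 99/200 := by
    rw [← Finset.sum_filter, Finset.filter_filter, Finset.sum_const]
    have hcount : (Finset.univ.filter fun y : Fin (m+2) → Bool =>
        XORn y = b ∧ y 0 = false).card = 2 ^ m := by
      refine Eq.trans ?_ (count_cube m b)
      exact card_filter_congr _ _ (fun y => and_comm)
    rw [hcount, nsmul_eq_mul]
    push_cast
    rw [mul_left_comm, hpow]
    norm_num
  have hB : ∑ y ∈ Finset.univ.filter (fun y : Fin (m+2) → Bool => XORn y = b),
      (if y 0 = true ∧ (∀ i : Fin (m+2), 2 ≤ (i:ℕ) → y i = false) then (1:ℝ)/200 else 0)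
      = 1/200 := by
    rw [← Finset.sum_filter, Finset.filter_filter]
    have hset : (Finset.univ.filter fun y : Fin (m+2) → Bool =>
        XORn y = b ∧ (y 0 = true ∧ ∀ i : Fin (m+2), 2 ≤ (i:ℕ) → y i = false))
        = {epair m (!b)} := by
      ext y
      simp only [Finset.mem_filter, Finset.mem_univ, true_and, Finset.mem_singleton]
      constructor
      · rintro ⟨hx, hp⟩
        rcases (pair_iff m y).mp hp with rfl | rfl
        · rw [xorn_epair] at hx
          rw [← hx]
          rfl
        · rw [xorn_epair] at hx
          rw [← hx]
          rfl
      · rintro rfl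
        refine ⟨by rw [xorn_epair]; cases b <;> rfl, epair_zero m (!b), epair_tail m (!b)⟩
    rw [hset, Finset.sum_singleton]
  rw [hA, hB]
  norm_num

lemma sum_cond (m : ℕ) (b : Bool) : ∑ y, condXOR (D16 m) b y = 1 := by
  classical
  have h : ∑ y, condXOR (D16 m) b y
      = ∑ y ∈ Finset.univ.filter (fun y : Fin (m+2) → Bool => XORn y = b), 2 * D16 m y := by
    rw [Finset.sum_filter]
    exact Finset.sum_congr rfl fun y _ => rfl
  rw [h, ← Finset.mul_sum, sumD16half]
  norm_num

lemma sum_cond_zero (m : ℕ) :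
    ∑ y ∈ Finset.univ.filter (fun y : Fin (m+2) → Bool => y 0 = false),
      condXOR (D16 m) true y = 99/100 := by
  classical
  have hpow : (2:ℝ)^m * ((1:ℝ)/2)^(m+1) = 1/2 := by
    rw [pow_succ, ← mul_assoc, ← mul_pow]
    norm_num
  have h1 : ∑ y ∈ Finset.univ.filter (fun y : Fin (m+2) → Bool => y 0 = false),
      condXOR (D16 m) true y
      = ∑ y ∈ Finset.univ.filter (fun y : Fin (m+2) → Bool => y 0 = false ∧ XORn y = true),
        2 * D16 m y := by
    rw [Finset.sum_filter, Finset.sum_filter]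
    apply Finset.sum_congr rfl
    intro y _
    by_cases h0 : y 0 = false
    · by_cases hx : XORn y = true
      · simp [h0, hx, condXOR]
      · simp [h0, hx, condXOR]
    · simp [h0]
  rw [h1]
  have h2 : ∀ y ∈ Finset.univ.filter (fun y : Fin (m+2) → Bool => y 0 = false ∧ XORn y = true),
      2 * D16 m y = 2 * ((99:ℝ)/100 * ((1:ℝ)/2)^(m+1)) := by
    intro y hy
    obtain ⟨h0, -⟩ := (Finset.mem_filter.mp hy).2
    unfold D16
    rw [if_pos h0, if_neg (by simp [h0]), add_zero]
  rw [Finset.sum_congr rfl h2, Finset.sum_const, count_cube m true, nsmul_eq_mul]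
  push_cast
  rw [mul_left_comm, mul_left_comm ((2:ℝ)^m), hpow]
  norm_num

lemma cond_support (m : ℕ) (b : Bool) (y : Fin (m+2) → Bool)
    (hne : condXOR (D16 m) b y ≠ 0) (h0 : y 0 = true) : y 1 = !b := by
  unfold condXOR at hne
  by_cases hx : XORn y = b
  · rw [if_pos hx] at hne
    have hD : D16 m y ≠ 0 := by
      intro h
      exact hne (by rw [h, mul_zero])
    have ht := D16_true_support m y h0 hD
    have hxor := xorn_true_case m y h0 ht
    rw [hxor] at hx
    cases b <;> cases h1 : y 1 <;> simp_all
  · rw [if_neg hx] at hne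
    exact absurd rfl hne

lemma sum_prodD {n k : ℕ} (D : (Fin n → Bool) → ℝ) (p : (Fin n → Bool) → Prop)
    [DecidablePred p] :
    ∑ x ∈ Finset.univ.filter
        (fun x : (Fin k × Fin n) → Bool => ∀ j : Fin k, p (fun i => x (j, i))),
      prodD D x = (∑ y ∈ Finset.univ.filter p, D y) ^ k := by
  classical
  have h1 : (∑ y ∈ Finset.univ.filter p, D y) ^ k
      = ∑ g ∈ Fintype.piFinset (fun _ : Fin k => Finset.univ.filter p),
          ∏ j : Fin k, D (g j) := by
    rw [← Finset.prod_univ_sum]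
    rw [Finset.prod_const, Finset.card_univ, Fintype.card_fin]
  rw [h1]
  refine Finset.sum_nbij' (fun x => fun j i => x (j, i)) (fun g => fun q => g q.1 q.2)
    ?_ ?_ ?_ ?_ ?_
  · intro x hx
    rw [Fintype.mem_piFinset]
    intro j
    rw [Finset.mem_filter]
    exact ⟨Finset.mem_univ _, (Finset.mem_filter.mp hx).2 j⟩
  · intro g hg
    rw [Finset.mem_filter]
    refine ⟨Finset.mem_univ _, fun j => ?_⟩
    have h := Fintype.mem_piFinset.mp hg j
    exact (Finset.mem_filter.mp h).2
  · intro x _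
    rfl
  · intro g _
    rfl
  · intro x _
    rfl

lemma sum_prodD_total {n k : ℕ} (D : (Fin n → Bool) → ℝ) :
    ∑ x : (Fin k × Fin n) → Bool, prodD D x = (∑ y, D y) ^ k := by
  classical
  have h := sum_prodD (k := k) D (fun _ => True)
  simpa using h

def probe {n k : ℕ} : List (Fin k) → DTree Bool (Fin k × Fin (n+2)) Bool
  | [] => .leaf false
  | j :: rest => .node (j, 0) fun a =>
      match a with
      | true => .node (j, 1) fun c => .leaf (!c)
      | false => probe rest

lemma sup_bool (f : Bool → ℕ) : Finset.univ.sup f = max (f true) (f false) := by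
  rw [Fintype.univ_bool, Finset.sup_insert, Finset.sup_singleton]

lemma probe_depth {n k : ℕ} (l : List (Fin k)) :
    (probe (n := n) l).depth ≤ l.length + 1 := by
  induction l with
  | nil => simp [probe, DTree.depth]
  | cons j rest ih =>
    have hd : (probe (n := n) (j :: rest)).depth
        = 1 + Finset.univ.sup (fun a : Bool => ((fun a : Bool => match a with
            | true => DTree.node (j, (1 : Fin (n+2))) fun c =>
                (DTree.leaf (!c) : DTree Bool (Fin k × Fin (n+2)) Bool)
            | false => probe (n := n) rest) a).depth) := rfl
    have hsup : Finset.univ.sup (fun a : Bool => ((fun a : Bool => match a with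
            | true => DTree.node (j, (1 : Fin (n+2))) fun c =>
                (DTree.leaf (!c) : DTree Bool (Fin k × Fin (n+2)) Bool)
            | false => probe (n := n) rest) a).depth) ≤ rest.length + 1 := by
      apply Finset.sup_le
      intro a _
      cases a
      · exact ih
      · have hinner : (DTree.node (j, (1 : Fin (n+2))) fun c =>
            (DTree.leaf (!c) : DTree Bool (Fin k × Fin (n+2)) Bool)).depth
            = 1 + Finset.univ.sup (fun _ : Bool => (0:ℕ)) := rfl
        have hzero : Finset.univ.sup (fun _ : Bool => (0:ℕ)) = 0 :=
          Finset.sup_const Finset.univ_nonempty 0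
        show (DTree.node (j, (1 : Fin (n+2))) fun c =>
            (DTree.leaf (!c) : DTree Bool (Fin k × Fin (n+2)) Bool)).depth ≤ rest.length + 1
        rw [hinner, hzero]
        omega
    rw [hd, List.length_cons]
    exact le_trans (Nat.add_le_add_left hsup 1) (by omega)

lemma probe_eval_false {n k : ℕ} (x : (Fin k × Fin (n+2)) → Bool)
    (hx : ∀ j, x (j, 0) = true → x (j, 1) = true) (l : List (Fin k)) :
    (probe (n := n) l).eval x = false := by
  induction l with
  | nil => rfl
  | cons j rest ih =>
    have heval : (probe (n := n) (j :: rest)).eval x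
        = ((fun a : Bool => match a with
            | true => DTree.node (j, (1 : Fin (n+2))) fun c =>
                (DTree.leaf (!c) : DTree Bool (Fin k × Fin (n+2)) Bool)
            | false => probe (n := n) rest) (x (j, 0))).eval x := rfl
    rw [heval]
    cases h0 : x (j, 0)
    · exact ih
    · have h1 := hx j h0
      show (!(x (j, 1))) = false
      rw [h1]
      rfl

lemma probe_eval_true {n k : ℕ} (x : (Fin k × Fin (n+2)) → Bool)
    (hx : ∀ j, x (j, 0) = true → x (j, 1) = false) (l : List (Fin k))
    (hex : ∃ j ∈ l, x (j, 0) = true) :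
    (probe (n := n) l).eval x = true := by
  induction l with
  | nil =>
    obtain ⟨j, hj, -⟩ := hex
    exact absurd hj List.not_mem_nil
  | cons j rest ih =>
    have heval : (probe (n := n) (j :: rest)).eval x
        = ((fun a : Bool => match a with
            | true => DTree.node (j, (1 : Fin (n+2))) fun c =>
                (DTree.leaf (!c) : DTree Bool (Fin k × Fin (n+2)) Bool)
            | false => probe (n := n) rest) (x (j, 0))).eval x := rfl
    rw [heval]
    cases h0 : x (j, 0)
    · obtain ⟨j', hj', hx'⟩ := hex
      have hmem : j' ∈ rest := by
        rcases List.mem_cons.mp hj' with rfl | h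
        · rw [hx'] at h0; exact absurd h0 (by simp)
        · exact h
      exact ih ⟨j', hmem, hx'⟩
    · have h1 := hx j h0
      show (!(x (j, 1))) = true
      rw [h1]
      rfl

set_option maxRecDepth 10000 in
lemma part2 (m : ℕ) :
    corrC (1/3) (condXOR (D16 m) false) (condXOR (D16 m) true) ≤ 70 := by
  classical
  apply Nat.sInf_le
  refine ⟨69, by norm_num, probe (n := m) (List.finRange 69), ?_, ?_⟩
  · have h := probe_depth (n := m) (List.finRange 69)
    simpa using h
  · -- success probability
    have htot0 : ∑ x : (Fin 69 × Fin (m+2)) → Bool, prodD (condXOR (D16 m) false) x = 1 := by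
      rw [sum_prodD_total, sum_cond m false, one_pow]
    have htot1 : ∑ x : (Fin 69 × Fin (m+2)) → Bool, prodD (condXOR (D16 m) true) x = 1 := by
      rw [sum_prodD_total, sum_cond m true, one_pow]
    -- the D0 side is always answered `false`
    have hP0 : prS (prodD (condXOR (D16 m) false))
        {x : (Fin 69 × Fin (m+2)) → Bool |
          (probe (n := m) (List.finRange 69)).eval x = false} = 1 := by
      rw [prS_eq]
      have hsplit := Finset.sum_filter_add_sum_filter_not Finset.univ
        (fun x : (Fin 69 × Fin (m+2)) → Bool =>
          (probe (n := m) (List.finRange 69)).eval x = false)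
        (prodD (condXOR (D16 m) false))
      have hzero : ∑ x ∈ Finset.univ.filter
          (fun x : (Fin 69 × Fin (m+2)) → Bool =>
            ¬ ((probe (n := m) (List.finRange 69)).eval x = false)),
          prodD (condXOR (D16 m) false) x = 0 := by
        apply Finset.sum_eq_zero
        intro x hx
        obtain ⟨-, hne⟩ := Finset.mem_filter.mp hx
        by_contra hc
        apply hne
        apply probe_eval_false
        intro j hj0
        unfold prodD at hc
        have hprod := Finset.prod_ne_zero_iff.mp hc j (Finset.mem_univ j)
        have hs := cond_support m false (fun i => x (j, i)) hprod hj0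
        simpa using hs
      rw [htot0, hzero, add_zero] at hsplit
      exact hsplit
    -- the D1 side
    have hq := sum_prodD (k := 69) (condXOR (D16 m) true)
      (fun y : Fin (m+2) → Bool => y 0 = false)
    rw [sum_cond_zero m] at hq
    have hsplit1 := Finset.sum_filter_add_sum_filter_not Finset.univ
      (fun x : (Fin 69 × Fin (m+2)) → Bool =>
        ∀ j : Fin 69, (fun i => x (j, i)) 0 = false)
      (prodD (condXOR (D16 m) true))
    rw [htot1, hq] at hsplit1
    have hnot : ∑ x ∈ Finset.univ.filter
        (fun x : (Fin 69 × Fin (m+2)) → Bool =>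
          ¬ ∀ j : Fin 69, (fun i => x (j, i)) 0 = false),
        prodD (condXOR (D16 m) true) x = 1 - (99/100:ℝ)^69 := by
      linarith [hsplit1]
    have hP1 : 1 - ((99:ℝ)/100)^69 ≤ prS (prodD (condXOR (D16 m) true))
        {x : (Fin 69 × Fin (m+2)) → Bool |
          (probe (n := m) (List.finRange 69)).eval x = true} := by
      rw [prS_eq, ← hnot,
        ← Finset.sum_filter_ne_zero (Finset.univ.filter
          (fun x : (Fin 69 × Fin (m+2)) → Bool =>
            ¬ ∀ j : Fin 69, (fun i => x (j, i)) 0 = false))]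
      apply Finset.sum_le_sum_of_subset_of_nonneg
      · intro x hx
        obtain ⟨hx1, hne⟩ := Finset.mem_filter.mp hx
        obtain ⟨-, hnp⟩ := Finset.mem_filter.mp hx1
        refine Finset.mem_filter.mpr ⟨Finset.mem_univ x, ?_⟩
        push_neg at hnp
        obtain ⟨j, hj⟩ := hnp
        apply probe_eval_true
        · intro j' h0
          unfold prodD at hne
          have hprod := Finset.prod_ne_zero_iff.mp hne j' (Finset.mem_univ j')
          have hs := cond_support m true (fun i => x (j', i)) hprod h0
          simpa using hs
        · refine ⟨j, List.mem_finRange j, ?_⟩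
          simpa using hj
      · intro x _ _
        unfold prodD
        apply Finset.prod_nonneg
        intro j _
        exact cond_nonneg m true _
    have hfrac : ((99:ℝ)/100)^69 ≤ 2/3 := by norm_num
    rw [hP0]
    linarith [hP1]


/-- For the Shaltiel distribution `D16 m` on `n = m + 2 ≥ 2` bits
(with probability 99/100, `0` followed by `n−1` uniform bits; with probability 1/100, `1`,
one uniform bit, then `0^{n−2}`): every deterministic decision tree of depth at most `n − 2`
errs with probability greater than `1/3` in computing `XOR_n` on `x ∼ D` (hence
`dt_{1/3}(XOR_n, D) ≥ n − 1`), while `corr_{1/3}(XOR_n, D) ≤ C`. -/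
theorem shaltiel_example :
    ∃ C : ℕ, 0 < C ∧
      ∀ m : ℕ,
        (∀ T : DTree Bool (Fin (m + 2)) Bool, T.depth ≤ m →
          prS (D16 m) {x | T.eval x = XORn x} < 2/3) ∧
        corrC (1/3) (condXOR (D16 m) false) (condXOR (D16 m) true) ≤ C := by
  exact ⟨70, by norm_num, fun m => ⟨fun T hT => part1 m T hT, part2 m⟩⟩
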